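/- arXiv:2602.11557 — 9 statements merged into one kernel-verified Lean document; each statement's English description precedes it below -/
import Mathlib

section
/- For every k ≥ 1, all vectors v, v' ∈ ℝ^k, and every index c ∈ {1,…,k}, the softmax components satisfy |S_c(v')/S_c(v) − 1| ≤ exp(2‖v − v'‖_∞) − 1. -/
open Finset Filter

/-- Softmax map on `ℝ^k`. -/
noncomputable def softmax {k : ℕ} (z : Fin k → ℝ) (c : Fin k) : ℝ :=
  Real.exp (z c) / ∑ j, Real.exp (z j)

/-- Logits `W x` of a linear classifier `W : ℝ^{k×d}` on input `x : ℝ^d`. -/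
noncomputable def logits {k d : ℕ} (W : Fin k → Fin d → ℝ) (x : Fin d → ℝ) : Fin k → ℝ :=
  fun c => ∑ j, W c j * x j

/-- Cross-entropy loss `L(W) = -(1/n) ∑ᵢ log S_{yᵢ}(W xᵢ)`. -/
noncomputable def lossCE {n k d : ℕ} (x : Fin n → Fin d → ℝ) (y : Fin n → Fin k)
    (W : Fin k → Fin d → ℝ) : ℝ :=
  -((1 : ℝ) / n) * ∑ i, Real.log (softmax (logits W (x i)) (y i))

/-- Proxy function `G(W) = (1/n) ∑ᵢ (1 - S_{yᵢ}(W xᵢ))`. -/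
noncomputable def proxyG {n k d : ℕ} (x : Fin n → Fin d → ℝ) (y : Fin n → Fin k)
    (W : Fin k → Fin d → ℝ) : ℝ :=
  ((1 : ℝ) / n) * ∑ i, (1 - softmax (logits W (x i)) (y i))

/-- Per-sample gradient matrix `gᵢ(W) = (S(W xᵢ) - e_{yᵢ}) xᵢᵀ`. -/
noncomputable def sampleGrad {k d : ℕ} (x : Fin d → ℝ) (y : Fin k)
    (W : Fin k → Fin d → ℝ) : Fin k → Fin d → ℝ :=
  fun c j => (softmax (logits W x) c - (if c = y then 1 else 0)) * x j

/-- Full gradient matrix `D(W) = (1/n) ∑ᵢ gᵢ(W)`. -/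
noncomputable def gradCE {n k d : ℕ} (x : Fin n → Fin d → ℝ) (y : Fin n → Fin k)
    (W : Fin k → Fin d → ℝ) : Fin k → Fin d → ℝ :=
  fun c j => ((1 : ℝ) / n) * ∑ i, sampleGrad (x i) (y i) W c j

/-- Entry-wise 1-norm of a matrix. -/
noncomputable def norm1M {k d : ℕ} (A : Fin k → Fin d → ℝ) : ℝ :=
  ∑ c, ∑ j, |A c j|

/-- 1-norm of a vector. -/
noncomputable def norm1V {d : ℕ} (v : Fin d → ℝ) : ℝ := ∑ j, |v j|

/-- `min_{c ≠ y} (e_y - e_c)ᵀ A x`. -/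
noncomputable def marginMin {k d : ℕ} (hk : 2 ≤ k) (A : Fin k → Fin d → ℝ)
    (x : Fin d → ℝ) (y : Fin k) : ℝ :=
  (Finset.univ.erase y).inf'
    (by
      obtain ⟨cne, hcne⟩ := Fintype.exists_ne_of_one_lt_card
        (by simpa using (by omega : 1 < k)) y
      exact ⟨cne, Finset.mem_erase.mpr ⟨hcne, Finset.mem_univ _⟩⟩)
    (fun c => logits A x y - logits A x c)

/-- `min_{i ∈ [n], c ≠ yᵢ} (e_{yᵢ} - e_c)ᵀ W xᵢ`. -/
noncomputable def dataMargin {n k d : ℕ} (hn : 1 ≤ n) (hk : 2 ≤ k)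
    (x : Fin n → Fin d → ℝ) (y : Fin n → Fin k) (W : Fin k → Fin d → ℝ) : ℝ :=
  Finset.univ.inf' ⟨⟨0, by omega⟩, Finset.mem_univ _⟩
    (fun i => marginMin hk W (x i) (y i))

/-- Max margin `γ` over the max-norm unit ball. -/
noncomputable def gammaMax {n k d : ℕ} (hn : 1 ≤ n) (hk : 2 ≤ k)
    (x : Fin n → Fin d → ℝ) (y : Fin n → Fin k) : ℝ :=
  sSup { g : ℝ | ∃ W' : Fin k → Fin d → ℝ, ‖W'‖ ≤ 1 ∧ g = dataMargin hn hk x y W' }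

/-- Mini-batch gradient `(1/b) ∑_{i ∈ B} gᵢ(W)`. -/
noncomputable def batchGrad {n k d : ℕ} (x : Fin n → Fin d → ℝ) (y : Fin n → Fin k)
    (B : Finset (Fin n)) (b : ℕ) (W : Fin k → Fin d → ℝ) : Fin k → Fin d → ℝ :=
  fun c j => ((1 : ℝ) / b) * ∑ i ∈ B, sampleGrad (x i) (y i) W c j

/-- Frobenius norm of a matrix. -/
noncomputable def frobNorm {k d : ℕ} (A : Fin k → Fin d → ℝ) : ℝ :=
  Real.sqrt (∑ c, ∑ j, (A c j) ^ 2)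
/-- stability of softmax components,
`|S_c(v')/S_c(v) − 1| ≤ exp(2‖v − v'‖_∞) − 1`. -/
theorem softmax_ratio_bound (k : ℕ) (hk : 1 ≤ k) (v v' : Fin k → ℝ) (c : Fin k) :
    |softmax v' c / softmax v c - 1| ≤ Real.exp (2 * ‖v - v'‖) - 1 := by
  set ε := ‖v - v'‖ with hε_def
  have hε : 0 ≤ ε := norm_nonneg _
  have hb : ∀ j, |v j - v' j| ≤ ε := fun j => by
    simpa using norm_le_pi_norm (v - v') j
  have Sv : 0 < ∑ j, Real.exp (v j) := by
    have : Nonempty (Fin k) := ⟨⟨0, hk⟩⟩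
    exact Finset.sum_pos (fun j _ => Real.exp_pos _) Finset.univ_nonempty
  have Sv' : 0 < ∑ j, Real.exp (v' j) := by
    have : Nonempty (Fin k) := ⟨⟨0, hk⟩⟩
    exact Finset.sum_pos (fun j _ => Real.exp_pos _) Finset.univ_nonempty
  have hpos : 0 < softmax v c := div_pos (Real.exp_pos _) Sv
  have hpos' : 0 < softmax v' c := div_pos (Real.exp_pos _) Sv'
  have hexp : ∀ j, Real.exp (v' j) ≤ Real.exp ε * Real.exp (v j) := by
    intro j
    rw [← Real.exp_add]
    exact Real.exp_le_exp.mpr (by have := abs_le.mp (hb j); linarith [this.1])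
  have hexp' : ∀ j, Real.exp (v j) ≤ Real.exp ε * Real.exp (v' j) := by
    intro j
    rw [← Real.exp_add]
    exact Real.exp_le_exp.mpr (by have := abs_le.mp (hb j); linarith [this.2])
  have hsum : ∑ j, Real.exp (v j) ≤ Real.exp ε * ∑ j, Real.exp (v' j) := by
    rw [Finset.mul_sum]
    exact Finset.sum_le_sum fun j _ => hexp' j
  have hsum' : ∑ j, Real.exp (v' j) ≤ Real.exp ε * ∑ j, Real.exp (v j) := by
    rw [Finset.mul_sum]
    exact Finset.sum_le_sum fun j _ => hexp j
  have eε : (0:ℝ) < Real.exp ε := Real.exp_pos _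
  have key1 : Real.exp (v' c) * ∑ j, Real.exp (v j)
      ≤ (Real.exp (2 * ε) * Real.exp (v c)) * ∑ j, Real.exp (v' j) := by
    calc Real.exp (v' c) * ∑ j, Real.exp (v j)
        ≤ (Real.exp ε * Real.exp (v c)) * (Real.exp ε * ∑ j, Real.exp (v' j)) :=
          mul_le_mul (hexp c) hsum (le_of_lt Sv)
            (le_of_lt (mul_pos eε (Real.exp_pos _)))
      _ = (Real.exp (2 * ε) * Real.exp (v c)) * ∑ j, Real.exp (v' j) := by
          rw [two_mul, Real.exp_add]; ring
  have key2 : Real.exp (v c) * ∑ j, Real.exp (v' j)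
      ≤ (Real.exp (2 * ε) * Real.exp (v' c)) * ∑ j, Real.exp (v j) := by
    calc Real.exp (v c) * ∑ j, Real.exp (v' j)
        ≤ (Real.exp ε * Real.exp (v' c)) * (Real.exp ε * ∑ j, Real.exp (v j)) :=
          mul_le_mul (hexp' c) hsum' (le_of_lt Sv')
            (le_of_lt (mul_pos eε (Real.exp_pos _)))
      _ = (Real.exp (2 * ε) * Real.exp (v' c)) * ∑ j, Real.exp (v j) := by
          rw [two_mul, Real.exp_add]; ring
  have h1 : softmax v' c ≤ Real.exp (2 * ε) * softmax v c := by
    unfold softmax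
    rw [mul_div_assoc']
    exact (div_le_div_iff₀ Sv' Sv).mpr key1
  have h2 : softmax v c ≤ Real.exp (2 * ε) * softmax v' c := by
    unfold softmax
    rw [mul_div_assoc']
    exact (div_le_div_iff₀ Sv Sv').mpr key2
  have up : softmax v' c / softmax v c ≤ Real.exp (2 * ε) := by
    rw [div_le_iff₀ hpos]; linarith
  have e2ε : (0:ℝ) < Real.exp (2 * ε) := Real.exp_pos _
  have lo : Real.exp (-(2 * ε)) ≤ softmax v' c / softmax v c := by
    rw [le_div_iff₀ hpos, Real.exp_neg]
    have := mul_le_mul_of_nonneg_left h2 (le_of_lt (inv_pos.mpr e2ε))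
    calc (Real.exp (2 * ε))⁻¹ * softmax v c
        ≤ (Real.exp (2 * ε))⁻¹ * (Real.exp (2 * ε) * softmax v' c) := this
      _ = softmax v' c := by field_simp
  have h1' : (1:ℝ) ≤ Real.exp (2 * ε) := Real.one_le_exp (by linarith)
  have hinv : Real.exp (-(2 * ε)) * Real.exp (2 * ε) = 1 := by
    rw [← Real.exp_add]; simp
  rw [abs_le]
  constructor
  · nlinarith
  · linarith
end

section
/- For every k ≥ 2, all vectors v, v' ∈ ℝ^k, and every index c ∈ {1,…,k}, the complements of the softmax components satisfy |(1 − S_c(v'))/(1 − S_c(v)) − 1| ≤ exp(2‖v − v'‖_∞) − 1. -/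
open Finset Filter

/-- stability of softmax complements,
`|(1 − S_c(v'))/(1 − S_c(v)) − 1| ≤ exp(2‖v − v'‖_∞) − 1`. -/
theorem softmax_complement_ratio_bound (k : ℕ) (hk : 2 ≤ k) (v v' : Fin k → ℝ)
    (c : Fin k) :
    |(1 - softmax v' c) / (1 - softmax v c) - 1| ≤ Real.exp (2 * ‖v - v'‖) - 1 := by
  set t := ‖v - v'‖ with ht
  have ht0 : (0:ℝ) ≤ t := norm_nonneg _
  have hpt : ∀ j, |v j - v' j| ≤ t := by
    intro j
    simpa [Real.norm_eq_abs] using norm_le_pi_norm (v - v') j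
  have key : ∀ (w w' : Fin k → ℝ), (∀ j, w j ≤ w' j + t) →
      ∀ s : Finset (Fin k), ∑ j ∈ s, Real.exp (w j) ≤ Real.exp t * ∑ j ∈ s, Real.exp (w' j) := by
    intro w w' h s
    rw [Finset.mul_sum]
    refine Finset.sum_le_sum fun j _ => ?_
    rw [← Real.exp_add]
    exact Real.exp_le_exp.mpr (by linarith [h j])
  have hvv' : ∀ j, v j ≤ v' j + t := fun j => by have := (abs_le.1 (hpt j)).2; linarith
  have hv'v : ∀ j, v' j ≤ v j + t := fun j => by have := (abs_le.1 (hpt j)).1; linarith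
  set A := ∑ j, Real.exp (v j) with hA
  set A' := ∑ j, Real.exp (v' j) with hA'
  set B := ∑ j ∈ Finset.univ.erase c, Real.exp (v j) with hB
  set B' := ∑ j ∈ Finset.univ.erase c, Real.exp (v' j) with hB'
  have hne : (Finset.univ.erase c).Nonempty := by
    obtain ⟨c', hc'⟩ := Fintype.exists_ne_of_one_lt_card (by simpa using (by omega : 1 < k)) c
    exact ⟨c', Finset.mem_erase.mpr ⟨hc', Finset.mem_univ _⟩⟩
  have hApos : 0 < A := Finset.sum_pos (fun j _ => Real.exp_pos _) ⟨c, Finset.mem_univ c⟩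
  have hA'pos : 0 < A' := Finset.sum_pos (fun j _ => Real.exp_pos _) ⟨c, Finset.mem_univ c⟩
  have hBpos : 0 < B := Finset.sum_pos (fun j _ => Real.exp_pos _) hne
  have hB'pos : 0 < B' := Finset.sum_pos (fun j _ => Real.exp_pos _) hne
  have hAB : A = Real.exp (v c) + B := (Finset.add_sum_erase _ _ (Finset.mem_univ c)).symm
  have hA'B' : A' = Real.exp (v' c) + B' := (Finset.add_sum_erase _ _ (Finset.mem_univ c)).symm
  have h1 : 1 - softmax v c = B / A := by
    rw [softmax]
    field_simp
    rw [← hA, sub_mul, div_mul_cancel₀ _ hApos.ne']; linarith [hAB]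
  have h1' : 1 - softmax v' c = B' / A' := by
    rw [softmax]
    field_simp
    rw [← hA', sub_mul, div_mul_cancel₀ _ hA'pos.ne']; linarith [hA'B']
  rw [h1, h1']
  have hR : (B' / A') / (B / A) = B' * A / (A' * B) := by
    rw [div_div_div_eq, mul_comm A' B]
  rw [hR]
  set E := Real.exp (2 * t) with hE
  have hE1 : 1 ≤ E := by
    rw [hE]; exact Real.one_le_exp (by linarith)
  have hE2 : E = Real.exp t * Real.exp t := by
    rw [hE, ← Real.exp_add]; ring_nf
  have hupper : B' * A ≤ E * (A' * B) := by
    have h1 := key v' v hv'v (Finset.univ.erase c)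
    have h2 := key v v' hvv' Finset.univ
    calc B' * A ≤ (Real.exp t * B) * (Real.exp t * A') := by
          exact mul_le_mul h1 h2 hApos.le (mul_nonneg (Real.exp_pos t).le hBpos.le)
      _ = E * (A' * B) := by rw [hE2]; ring
  have hlower : A' * B ≤ E * (B' * A) := by
    have h1 := key v' v hv'v Finset.univ
    have h2 := key v v' hvv' (Finset.univ.erase c)
    calc A' * B ≤ (Real.exp t * A) * (Real.exp t * B') := by
          exact mul_le_mul h1 h2 hBpos.le (mul_nonneg (Real.exp_pos t).le hApos.le)
      _ = E * (B' * A) := by rw [hE2]; ring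
  have hden : 0 < A' * B := mul_pos hA'pos hBpos
  rw [abs_le]
  constructor
  · rw [div_sub' hden.ne', le_div_iff₀ hden]
    nlinarith [hlower, sq_nonneg (E - 1), mul_pos hB'pos hApos, hden, hE1]
  · rw [div_sub' hden.ne', div_le_iff₀ hden]
    nlinarith [hupper, hden]
end

section
/- Let s ∈ ℝ^k be a probability vector (s_j ≥ 0 for all j and ∑_{j=1}^k s_j = 1). Then for every index c ∈ {1,…,k} and every vector v ∈ ℝ^k, the quadratic form of the softmax Hessian satisfies vᵀ (diag(s) − s sᵀ) v ≤ 4 (1 − s_c) (max_j |v[j]|)². -/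
open Finset Filter

/-- softmax Hessian quadratic form bound
`vᵀ (diag s − s sᵀ) v ≤ 4 (1 − s_c) (max_j |v_j|)²`. -/
theorem softmax_hessian_quadratic_bound (k : ℕ) (s : Fin k → ℝ)
    (hs : ∀ j, 0 ≤ s j) (hsum : ∑ j, s j = 1) (c : Fin k) (v : Fin k → ℝ) :
    ∑ i, ∑ j, v i * ((Matrix.diagonal s - Matrix.vecMulVec s s) i j) * v j
      ≤ 4 * (1 - s c) * ‖v‖ ^ 2 := by
  set M := ‖v‖ with hM
  have hMle : ∀ i, |v i| ≤ M := fun i => by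
    simpa [Real.norm_eq_abs] using norm_le_pi_norm v i
  -- rewrite LHS
  have hLHS : ∑ i, ∑ j, v i * ((Matrix.diagonal s - Matrix.vecMulVec s s) i j) * v j
      = ∑ i, s i * (v i)^2 - (∑ i, s i * v i)^2 := by
    have : ∀ i j : Fin k, v i * ((Matrix.diagonal s - Matrix.vecMulVec s s) i j) * v j
        = v i * (Matrix.diagonal s i j) * v j - (s i * v i) * (s j * v j) := by
      intro i j
      simp [Matrix.sub_apply, Matrix.vecMulVec_apply]
      ring
    simp only [this, Finset.sum_sub_distrib, ← Finset.sum_mul, ← Finset.mul_sum]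
    congr 1
    · refine Finset.sum_congr rfl fun i _ => ?_
      rw [Finset.sum_eq_single i]
      · simp [Matrix.diagonal_apply_eq]; ring
      · intro j _ hj; simp [Matrix.diagonal_apply_ne' s hj]
      · simp
    · rw [sq]
  rw [hLHS]
  set a := v c with ha
  have key : ∑ i, s i * (v i)^2 - (∑ i, s i * v i)^2
      ≤ ∑ i, s i * (v i - a)^2 := by
    have expand : ∑ i, s i * (v i - a)^2
        = ∑ i, s i * (v i)^2 - 2*a*(∑ i, s i * v i) + a^2 := by
      have : ∀ i : Fin k, s i * (v i - a)^2
          = s i * (v i)^2 - 2*a*(s i * v i) + a^2 * s i := by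
        intro i; ring
      simp only [this, Finset.sum_add_distrib, Finset.sum_sub_distrib,
        ← Finset.mul_sum, hsum]
      ring
    rw [expand]
    nlinarith [sq_nonneg ((∑ i, s i * v i) - a)]
  refine key.trans ?_
  have hsum' : ∑ i ∈ Finset.univ.erase c, s i = 1 - s c := by
    have := Finset.add_sum_erase Finset.univ s (Finset.mem_univ c)
    rw [hsum] at this; linarith
  have hterm : ∀ i ∈ Finset.univ.erase c, s i * (v i - a)^2 ≤ s i * (4 * M^2) := by
    intro i _
    apply mul_le_mul_of_nonneg_left _ (hs i)
    have h1 : |v i - a| ≤ 2 * M := by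
      calc |v i - a| ≤ |v i| + |a| := abs_sub _ _
        _ ≤ M + M := add_le_add (hMle i) (hMle c)
        _ = 2 * M := by ring
    have := sq_le_sq' (by linarith [abs_nonneg (v i - a), neg_abs_le (v i - a)]) (le_trans (le_abs_self _) h1)
    calc (v i - a)^2 ≤ (2*M)^2 := this
      _ = 4 * M^2 := by ring
  calc ∑ i, s i * (v i - a)^2 = ∑ i ∈ Finset.univ.erase c, s i * (v i - a)^2 := by
        rw [← Finset.add_sum_erase Finset.univ _ (Finset.mem_univ c)]
        simp [ha]
    _ ≤ ∑ i ∈ Finset.univ.erase c, s i * (4 * M^2) := Finset.sum_le_sum hterm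
    _ = (1 - s c) * (4 * M^2) := by rw [← Finset.sum_mul, hsum']
    _ = 4 * (1 - s c) * M^2 := by ring
end

section
/- For every W ∈ ℝ^{k×d} and every A ∈ ℝ^{k×d}, the inner product of A with the negative loss gradient satisfies ⟨A, −D(W)⟩ ≥ (1/n)∑_{i=1}^n (1 − S_{y_i}(W x_i)) · min_{c ≠ y_i} (e_{y_i} − e_c)ᵀ A x_i. -/
open Finset Filter

lemma softmax_nonneg' {k : ℕ} (z : Fin k → ℝ) (c : Fin k) : 0 ≤ softmax z c := by
  unfold softmax; positivity

lemma softmax_sum_one {k : ℕ} (hk : 2 ≤ k) (z : Fin k → ℝ) : ∑ c, softmax z c = 1 := by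
  unfold softmax
  rw [← Finset.sum_div]
  have h : 0 < ∑ j, Real.exp (z j) :=
    Finset.sum_pos (fun j _ => Real.exp_pos _) ⟨⟨0, by omega⟩, Finset.mem_univ _⟩
  field_simp

lemma per_sample_key {k d : ℕ} (hk : 2 ≤ k) (A : Fin k → Fin d → ℝ)
    (xi : Fin d → ℝ) (yi : Fin k) (p : Fin k → ℝ) (hp : ∀ c, 0 ≤ p c)
    (hs : ∑ c, p c = 1) :
    ∑ c, ((if c = yi then 1 else 0) - p c) * logits A xi c
      ≥ (1 - p yi) * marginMin hk A xi yi := by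
  set v := logits A xi with hv
  set m := marginMin hk A xi yi with hm
  have hpe : ∑ c ∈ Finset.univ.erase yi, p c = 1 - p yi := by
    have := Finset.sum_erase_add Finset.univ p (Finset.mem_univ yi)
    rw [hs] at this; linarith
  have hpve : ∑ c ∈ Finset.univ.erase yi, p c * v c
      = (∑ c, p c * v c) - p yi * v yi := by
    have := Finset.sum_erase_add Finset.univ (fun c => p c * v c) (Finset.mem_univ yi)
    linarith
  have h1 : ∑ c, ((if c = yi then 1 else 0) - p c) * v c
      = ∑ c ∈ Finset.univ.erase yi, p c * (v yi - v c) := by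
    simp only [sub_mul, ite_mul, one_mul, zero_mul, Finset.sum_sub_distrib,
      Finset.sum_ite_eq', Finset.mem_univ, if_true, mul_sub, Finset.sum_sub_distrib,
      ← Finset.sum_mul, hpe, hpve]
    ring
  rw [h1, ge_iff_le, ← hpe, Finset.sum_mul]
  apply Finset.sum_le_sum
  intro c hc
  have : m ≤ v yi - v c := Finset.inf'_le _ hc
  exact mul_le_mul_of_nonneg_left this (hp c)

/-- `⟨A, −D(W)⟩ ≥ (1/n) ∑ᵢ (1 − S_{yᵢ}(W xᵢ)) · min_{c ≠ yᵢ} (e_{yᵢ} − e_c)ᵀ A xᵢ`. -/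
theorem inner_neg_grad_lower_bound (n k d : ℕ)
    (hn : 1 ≤ n) (hk : 2 ≤ k) (hd : 1 ≤ d)
    (x : Fin n → Fin d → ℝ) (y : Fin n → Fin k)
    (W A : Fin k → Fin d → ℝ) :
    ∑ cc, ∑ j, A cc j * (-(gradCE x y W cc j))
      ≥ ((1 : ℝ) / n) * ∑ i,
          (1 - softmax (logits W (x i)) (y i)) * marginMin hk A (x i) (y i) := by
  have expand : ∀ cc j, A cc j * (-(gradCE x y W cc j))
      = ∑ i, ((1 : ℝ)/n) * (((if cc = y i then 1 else 0)
          - softmax (logits W (x i)) cc) * (A cc j * x i j)) := by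
    intro cc j
    simp only [gradCE, sampleGrad, Finset.mul_sum, mul_neg, ← Finset.sum_neg_distrib]
    exact Finset.sum_congr rfl fun i _ => by ring
  have hL : ∑ cc, ∑ j, A cc j * (-(gradCE x y W cc j))
      = ((1 : ℝ) / n) * ∑ i, ∑ cc,
          ((if cc = y i then 1 else 0) - softmax (logits W (x i)) cc)
            * logits A (x i) cc := by
    calc ∑ cc, ∑ j, A cc j * (-(gradCE x y W cc j))
        = ∑ cc, ∑ j, ∑ i, ((1 : ℝ)/n) * (((if cc = y i then 1 else 0)
            - softmax (logits W (x i)) cc) * (A cc j * x i j)) :=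
          Finset.sum_congr rfl fun cc _ => Finset.sum_congr rfl fun j _ => expand cc j
      _ = ∑ i, ∑ cc, ∑ j, ((1 : ℝ)/n) * (((if cc = y i then 1 else 0)
            - softmax (logits W (x i)) cc) * (A cc j * x i j)) := by
          rw [show (∑ cc, ∑ j, ∑ i, ((1 : ℝ)/n) * (((if cc = y i then 1 else 0)
            - softmax (logits W (x i)) cc) * (A cc j * x i j)))
            = ∑ cc, ∑ i, ∑ j, ((1 : ℝ)/n) * (((if cc = y i then 1 else 0)
            - softmax (logits W (x i)) cc) * (A cc j * x i j)) from
            Finset.sum_congr rfl fun cc _ => Finset.sum_comm]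
          exact Finset.sum_comm
      _ = ((1 : ℝ) / n) * ∑ i, ∑ cc,
          ((if cc = y i then 1 else 0) - softmax (logits W (x i)) cc)
            * logits A (x i) cc := by
          rw [Finset.mul_sum]
          refine Finset.sum_congr rfl fun i _ => ?_
          rw [Finset.mul_sum]
          refine Finset.sum_congr rfl fun cc _ => ?_
          unfold logits
          rw [Finset.mul_sum, Finset.mul_sum]
  rw [hL]
  apply mul_le_mul_of_nonneg_left _ (by positivity)
  apply Finset.sum_le_sum
  intro i _
  exact per_sample_key hk A (x i) (y i) (softmax (logits W (x i)))
    (softmax_nonneg' _) (softmax_sum_one hk _)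
end

section
/- Suppose ‖x_i‖_1 ≤ R for all i ∈ {1,…,n}, where R > 0. Then for all W, W' ∈ ℝ^{k×d}, the cross-entropy loss satisfies the Lipschitz bound |L(W) − L(W')| ≤ 2R ‖W − W'‖_max. -/
open Finset Filter

/-- Lipschitz bound `|L(W) − L(W')| ≤ 2R ‖W − W'‖_max`. -/
theorem lossCE_lipschitz (n k d : ℕ) (hn : 1 ≤ n) (hk : 2 ≤ k) (hd : 1 ≤ d)
    (x : Fin n → Fin d → ℝ) (y : Fin n → Fin k)
    (R : ℝ) (hR : 0 < R) (hx : ∀ i, norm1V (x i) ≤ R)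
    (W W' : Fin k → Fin d → ℝ) :
    |lossCE x y W - lossCE x y W'| ≤ 2 * R * ‖W - W'‖ := by
  haveI : Nonempty (Fin k) := ⟨⟨0, by omega⟩⟩
  -- log-sum-exp one-sided Lipschitz
  have lse_sub_le : ∀ (z z' : Fin k → ℝ) (E : ℝ), (∀ j, z j - z' j ≤ E) →
      Real.log (∑ j, Real.exp (z j)) - Real.log (∑ j, Real.exp (z' j)) ≤ E := by
    intro z z' E h
    have hpos' : (0 : ℝ) < ∑ j, Real.exp (z' j) :=
      Finset.sum_pos (fun j _ => Real.exp_pos _) Finset.univ_nonempty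
    have hpos : (0 : ℝ) < ∑ j, Real.exp (z j) :=
      Finset.sum_pos (fun j _ => Real.exp_pos _) Finset.univ_nonempty
    have hle : ∑ j, Real.exp (z j) ≤ Real.exp E * ∑ j, Real.exp (z' j) := by
      rw [Finset.mul_sum]
      refine Finset.sum_le_sum fun j _ => ?_
      rw [← Real.exp_add]
      exact Real.exp_le_exp.mpr (by linarith [h j])
    have := Real.log_le_log hpos hle
    rw [Real.log_mul (Real.exp_ne_zero E) hpos'.ne', Real.log_exp] at this
    linarith
  -- per-sample bound
  have key : ∀ i : Fin n,
      |Real.log (softmax (logits W (x i)) (y i)) -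
        Real.log (softmax (logits W' (x i)) (y i))| ≤ 2 * R * ‖W - W'‖ := by
    intro i
    set z := logits W (x i)
    set z' := logits W' (x i)
    have hcoord : ∀ c, |z c - z' c| ≤ R * ‖W - W'‖ := by
      intro c
      have : z c - z' c = ∑ j, (W c j - W' c j) * x i j := by
        simp [z, z', logits, ← Finset.sum_sub_distrib, sub_mul]
      rw [this]
      calc |∑ j, (W c j - W' c j) * x i j| ≤ ∑ j, |(W c j - W' c j) * x i j| :=
            Finset.abs_sum_le_sum_abs _ _
        _ ≤ ∑ j, ‖W - W'‖ * |x i j| := by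
            refine Finset.sum_le_sum fun j _ => ?_
            rw [abs_mul]
            apply mul_le_mul_of_nonneg_right _ (abs_nonneg _)
            have h1 : |(W - W') c j| ≤ ‖(W - W') c‖ := by
              simpa [Real.norm_eq_abs] using norm_le_pi_norm ((W - W') c) j
            have h2 : ‖(W - W') c‖ ≤ ‖W - W'‖ := norm_le_pi_norm (W - W') c
            simpa [Pi.sub_apply] using h1.trans h2
        _ = ‖W - W'‖ * norm1V (x i) := by rw [norm1V, Finset.mul_sum]
        _ ≤ ‖W - W'‖ * R := mul_le_mul_of_nonneg_left (hx i) (norm_nonneg _)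
        _ = R * ‖W - W'‖ := mul_comm _ _
    have hsexp : ∀ (w : Fin k → ℝ) (c : Fin k),
        Real.log (softmax w c) = w c - Real.log (∑ j, Real.exp (w j)) := by
      intro w c
      have hpos : (0 : ℝ) < ∑ j, Real.exp (w j) :=
        Finset.sum_pos (fun j _ => Real.exp_pos _) Finset.univ_nonempty
      rw [softmax, Real.log_div (Real.exp_ne_zero _) hpos.ne', Real.log_exp]
    rw [hsexp, hsexp]
    have h1 := lse_sub_le z z' (R * ‖W - W'‖) (fun j => (abs_le.mp (hcoord j)).2)
    have h2 := lse_sub_le z' z (R * ‖W - W'‖)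
      (fun j => by have := (abs_le.mp (hcoord j)).1; linarith)
    have h3 := (abs_le.mp (hcoord (y i))).1
    have h4 := (abs_le.mp (hcoord (y i))).2
    rw [abs_le]
    constructor <;> [nlinarith [abs_nonneg (z (y i) - z' (y i))]; nlinarith]
  -- conclude
  have hdiff : lossCE x y W - lossCE x y W' =
      (1 / n : ℝ) * ∑ i, (Real.log (softmax (logits W' (x i)) (y i)) -
        Real.log (softmax (logits W (x i)) (y i))) := by
    simp [lossCE, Finset.sum_sub_distrib, mul_sub]
    ring
  rw [hdiff, abs_mul]
  have hn0 : (0 : ℝ) < n := by exact_mod_cast hn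
  have : |(1 / n : ℝ)| = 1 / n := abs_of_pos (by positivity)
  rw [this]
  calc (1 / n : ℝ) * |∑ i, _| ≤ (1 / n : ℝ) * ∑ i : Fin n, 2 * R * ‖W - W'‖ := by
        apply mul_le_mul_of_nonneg_left _ (by positivity)
        refine (Finset.abs_sum_le_sum_abs _ _).trans (Finset.sum_le_sum fun i _ => ?_)
        rw [abs_sub_comm]; exact key i
    _ = 2 * R * ‖W - W'‖ := by
        rw [Finset.sum_const, Finset.card_univ, Fintype.card_fin, nsmul_eq_mul]
        field_simp
end

section
/- For every W ∈ ℝ^{k×d}, the proxy function and the cross-entropy loss satisfy G(W) ≤ L(W) and G(W) ≥ L(W) · (1 − n·L(W)/2). -/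
open Finset Filter

lemma exp_neg_le_quad {u : ℝ} (hu : 0 ≤ u) : Real.exp (-u) ≤ 1 - u + u ^ 2 / 2 := by
  have h1 : 1 + u + u ^ 2 / 2 ≤ Real.exp u := Real.quadratic_le_exp_of_nonneg hu
  have h2 : Real.exp (-u) * Real.exp u = 1 := by rw [← Real.exp_add]; simp
  have h3 : (0:ℝ) < Real.exp u := Real.exp_pos u
  nlinarith [sq_nonneg u, sq_nonneg (u^2), Real.exp_pos (-u)]


/-- proxy-loss comparison `G(W) ≤ L(W)` and `G(W) ≥ L(W)(1 − n L(W)/2)`. -/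
theorem proxy_loss_comparison (n k d : ℕ) (hn : 1 ≤ n) (hk : 2 ≤ k) (hd : 1 ≤ d)
    (x : Fin n → Fin d → ℝ) (y : Fin n → Fin k) (W : Fin k → Fin d → ℝ) :
    proxyG x y W ≤ lossCE x y W
    ∧ proxyG x y W ≥ lossCE x y W * (1 - (n : ℝ) * lossCE x y W / 2) := by
  set s : Fin n → ℝ := fun i => softmax (logits W (x i)) (y i) with hs
  have hpos : ∀ i, 0 < s i := by
    intro i
    exact div_pos (Real.exp_pos _) (Finset.sum_pos (fun j _ => Real.exp_pos _) ⟨y i, mem_univ _⟩)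
  set ℓ : Fin n → ℝ := fun i => -Real.log (s i) with hℓ
  have hse : ∀ i, s i = Real.exp (-ℓ i) := by
    intro i; simp [hℓ, Real.exp_log (hpos i)]
  have hℓnn : ∀ i, 0 ≤ ℓ i := by
    intro i
    have : s i ≤ 1 := by
      rw [hs]
      unfold softmax
      apply div_le_one_of_le₀
      · exact Finset.single_le_sum (fun j _ => (Real.exp_pos _).le) (mem_univ _)
      · exact Finset.sum_nonneg fun j _ => (Real.exp_pos _).le
    simp only [hℓ, Left.nonneg_neg_iff]
    exact Real.log_nonpos (hpos i).le this
  have hnpos : (0:ℝ) < n := by exact_mod_cast hn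
  have hL : lossCE x y W = ((1:ℝ)/n) * ∑ i, ℓ i := by
    unfold lossCE
    simp only [hℓ]
    rw [Finset.sum_neg_distrib]
    ring
  have hG : proxyG x y W = ((1:ℝ)/n) * ∑ i, (1 - s i) := rfl
  constructor
  · rw [hG, hL]
    apply mul_le_mul_of_nonneg_left _ (by positivity)
    apply Finset.sum_le_sum
    intro i _
    have := Real.log_le_sub_one_of_pos (hpos i)
    simp only [hℓ]; linarith
  · set T := ∑ i, ℓ i with hT
    have hTnn : 0 ≤ T := Finset.sum_nonneg fun i _ => hℓnn i
    have hsum1 : ∑ i, (1 - s i) ≥ T - (∑ i, (ℓ i)^2) / 2 := by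
      rw [ge_iff_le]
      have h : ∑ i, (ℓ i - (ℓ i)^2/2) ≤ ∑ i, (1 - s i) := by
        apply Finset.sum_le_sum
        intro i _
        have := exp_neg_le_quad (hℓnn i)
        rw [hse i]; linarith
      calc T - (∑ i, (ℓ i)^2)/2 = ∑ i, (ℓ i - (ℓ i)^2/2) := by
            rw [Finset.sum_sub_distrib, ← Finset.sum_div, ← hT]
        _ ≤ _ := h
    have hsum2 : ∑ i, (ℓ i)^2 ≤ T^2 := by
      calc ∑ i, (ℓ i)^2 ≤ ∑ i, ℓ i * T := by
            apply Finset.sum_le_sum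
            intro i _
            have : ℓ i ≤ T := Finset.single_le_sum (fun j _ => hℓnn j) (mem_univ i)
            nlinarith [hℓnn i]
        _ = T^2 := by rw [← Finset.sum_mul, ← hT]; ring
    rw [hG, hL, ge_iff_le]
    have h1 : ∑ i, (1 - s i) ≥ T - T^2/2 := by linarith
    have h2 : (1:ℝ)/n * (T - T^2/2) ≤ (1:ℝ)/n * ∑ i, (1 - s i) := by
      apply mul_le_mul_of_nonneg_left (by linarith) (by positivity)
    calc 1/(n:ℝ) * T * (1 - (n:ℝ) * (1/(n:ℝ) * T) / 2) = (1:ℝ)/n * (T - T^2/2) := by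
          field_simp
      _ ≤ _ := h2
end

section
/- For every W ∈ ℝ^{k×d}: if L(W) ≤ (log 2)/n then L(W) ≤ 2 G(W); and if G(W) ≤ 1/(2n) then L(W) ≤ 2 G(W). -/
open Finset Filter

lemma softmax_pos {k : ℕ} (hk : 1 ≤ k) (z : Fin k → ℝ) (c : Fin k) :
    0 < softmax z c := by
  have : Nonempty (Fin k) := ⟨⟨0, by omega⟩⟩
  exact div_pos (Real.exp_pos _) (Finset.sum_pos (fun j _ => Real.exp_pos _) univ_nonempty)

lemma softmax_le_one {k : ℕ} (hk : 1 ≤ k) (z : Fin k → ℝ) (c : Fin k) :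
    softmax z c ≤ 1 := by
  have : Nonempty (Fin k) := ⟨⟨0, by omega⟩⟩
  have hs : 0 < ∑ j, Real.exp (z j) :=
    Finset.sum_pos (fun j _ => Real.exp_pos _) univ_nonempty
  rw [softmax, div_le_one hs]
  exact Finset.single_le_sum (fun j _ => (Real.exp_pos _).le) (mem_univ c)

lemma neg_log_le {p : ℝ} (hp : 1/2 ≤ p) (hp1 : p ≤ 1) : -Real.log p ≤ 2 * (1 - p) := by
  have hp0 : (0:ℝ) < p := lt_of_lt_of_le (by norm_num) hp
  have h1 : -Real.log p ≤ p⁻¹ - 1 := by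
    have := Real.log_le_sub_one_of_pos (inv_pos.mpr hp0)
    rwa [Real.log_inv] at this
  have hc : p * p⁻¹ = 1 := mul_inv_cancel₀ (ne_of_gt hp0)
  nlinarith [mul_nonneg (by linarith : (0:ℝ) ≤ 2*p - 1) (by linarith : (0:ℝ) ≤ 1 - p)]

lemma key_sum {n k d : ℕ} (hn : 1 ≤ n) (hk : 2 ≤ k)
    (x : Fin n → Fin d → ℝ) (y : Fin n → Fin k) (W : Fin k → Fin d → ℝ)
    (h : ∀ i, 1/2 ≤ softmax (logits W (x i)) (y i)) :
    lossCE x y W ≤ 2 * proxyG x y W := by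
  have hnp : (0:ℝ) < n := by exact_mod_cast hn
  have hpos : (0:ℝ) ≤ 1/(n:ℝ) := by positivity
  have hsum : ∑ i, -Real.log (softmax (logits W (x i)) (y i))
      ≤ ∑ i, 2 * (1 - softmax (logits W (x i)) (y i)) := by
    apply Finset.sum_le_sum
    intro i _
    exact neg_log_le (h i) (softmax_le_one (by omega) (logits W (x i)) (y i))
  rw [Finset.sum_neg_distrib, ← Finset.mul_sum] at hsum
  rw [lossCE, proxyG]
  nlinarith [mul_le_mul_of_nonneg_left hsum hpos]

/-- if `L(W) ≤ (log 2)/n` or `G(W) ≤ 1/(2n)` then `L(W) ≤ 2 G(W)`. -/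
theorem loss_le_two_proxy (n k d : ℕ) (hn : 1 ≤ n) (hk : 2 ≤ k) (hd : 1 ≤ d)
    (x : Fin n → Fin d → ℝ) (y : Fin n → Fin k) (W : Fin k → Fin d → ℝ) :
    (lossCE x y W ≤ Real.log 2 / n → lossCE x y W ≤ 2 * proxyG x y W)
    ∧ (proxyG x y W ≤ 1 / (2 * n) → lossCE x y W ≤ 2 * proxyG x y W) := by
  set p : Fin n → ℝ := fun i => softmax (logits W (x i)) (y i) with hp
  have hnp : (0:ℝ) < n := by exact_mod_cast hn
  have hp0 : ∀ i, 0 < p i := fun i => softmax_pos (by omega) _ _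
  have hp1 : ∀ i, p i ≤ 1 := fun i => softmax_le_one (by omega) _ _
  constructor
  · intro hL
    apply key_sum hn hk
    intro i
    -- each -log p i ≤ log 2
    have hterm : -Real.log (p i) ≤ Real.log 2 := by
      have hLs : ∑ j, -Real.log (p j) ≤ Real.log 2 := by
        rw [lossCE, neg_mul, neg_le] at hL
        rw [Finset.sum_neg_distrib]
        have := mul_le_mul_of_nonneg_left hL (le_of_lt hnp)
        calc -∑ j, Real.log (p j) = (n:ℝ) * -(1/(n:ℝ) * ∑ j, Real.log (p j)) := by
              field_simp
          _ ≤ (n:ℝ) * (Real.log 2 / n) := by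
              apply mul_le_mul_of_nonneg_left _ (le_of_lt hnp)
              linarith [hL]
          _ = Real.log 2 := by field_simp
      refine le_trans ?_ hLs
      have : ∀ j ∈ Finset.univ, 0 ≤ -Real.log (p j) := by
        intro j _
        simp only [neg_nonneg]
        exact Real.log_nonpos (le_of_lt (hp0 j)) (hp1 j)
      exact Finset.single_le_sum this (mem_univ i)
    have : Real.log (p i)⁻¹ ≤ Real.log 2 := by rwa [Real.log_inv]
    have hinv : (p i)⁻¹ ≤ 2 :=
      (Real.log_le_log_iff (inv_pos.mpr (hp0 i)) (by norm_num)).mp this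
    have := (inv_le_comm₀ (hp0 i) (by norm_num : (0:ℝ) < 2)).mp ?_
    · linarith [this]
    · linarith [hinv]
  · intro hG
    apply key_sum hn hk
    intro i
    have hterm : 1 - p i ≤ 1/2 := by
      have hGs : ∑ j, (1 - p j) ≤ 1/2 := by
        rw [proxyG] at hG
        have := mul_le_mul_of_nonneg_left hG (le_of_lt hnp)
        calc ∑ j, (1 - p j) = (n:ℝ) * (1/(n:ℝ) * ∑ j, (1 - p j)) := by field_simp
          _ ≤ (n:ℝ) * (1/(2*n)) := mul_le_mul_of_nonneg_left hG (le_of_lt hnp)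
          _ = 1/2 := by field_simp
      refine le_trans ?_ hGs
      have : ∀ j ∈ Finset.univ, 0 ≤ 1 - p j := fun j _ => by linarith [hp1 j]
      exact Finset.single_le_sum this (mem_univ i)
    linarith
end

section
/- Suppose ‖x_i‖_1 ≤ R for all i ∈ {1,…,n}, where R > 0. Then for all W, W' ∈ ℝ^{k×d}, the proxy function is stable: G(W') ≤ exp(2R ‖W' − W‖_max) · G(W). -/
open Finset Filter

lemma one_sub_softmax_eq {k : ℕ} (z : Fin k → ℝ) (y : Fin k) :
    1 - softmax z y = (∑ j ∈ Finset.univ.erase y, Real.exp (z j)) / ∑ j, Real.exp (z j) := by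
  have hD : (0:ℝ) < ∑ j, Real.exp (z j) :=
    Finset.sum_pos (fun j _ => Real.exp_pos _) ⟨y, Finset.mem_univ _⟩
  have hsplit : ∑ j, Real.exp (z j)
      = Real.exp (z y) + ∑ j ∈ Finset.univ.erase y, Real.exp (z j) :=
    (Finset.add_sum_erase _ _ (Finset.mem_univ y)).symm
  rw [softmax, eq_div_iff (ne_of_gt hD), sub_mul, one_mul,
    div_mul_cancel₀ _ (ne_of_gt hD)]
  linarith [hsplit]

lemma one_sub_softmax_stab {k : ℕ} (z z' : Fin k → ℝ) (y : Fin k) (a : ℝ)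
    (ha : 0 ≤ a) (h : ∀ c, |z' c - z c| ≤ a) :
    1 - softmax z' y ≤ Real.exp (2 * a) * (1 - softmax z y) := by
  have hD : (0:ℝ) < ∑ j, Real.exp (z j) :=
    Finset.sum_pos (fun j _ => Real.exp_pos _) ⟨y, Finset.mem_univ _⟩
  have hD' : (0:ℝ) < ∑ j, Real.exp (z' j) :=
    Finset.sum_pos (fun j _ => Real.exp_pos _) ⟨y, Finset.mem_univ _⟩
  rw [one_sub_softmax_eq, one_sub_softmax_eq]
  have hN : ∑ j ∈ Finset.univ.erase y, Real.exp (z' j)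
      ≤ Real.exp a * ∑ j ∈ Finset.univ.erase y, Real.exp (z j) := by
    rw [Finset.mul_sum]
    refine Finset.sum_le_sum fun j _ => ?_
    rw [← Real.exp_add]
    exact Real.exp_le_exp.mpr (by linarith [abs_le.mp (h j) |>.2])
  have hDge : Real.exp (-a) * ∑ j, Real.exp (z j) ≤ ∑ j, Real.exp (z' j) := by
    rw [Finset.mul_sum]
    refine Finset.sum_le_sum fun j _ => ?_
    rw [← Real.exp_add]
    exact Real.exp_le_exp.mpr (by linarith [abs_le.mp (h j) |>.1])
  have hNnn : (0:ℝ) ≤ ∑ j ∈ Finset.univ.erase y, Real.exp (z j) :=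
    Finset.sum_nonneg fun j _ => (Real.exp_pos _).le
  rw [div_le_iff₀ hD']
  have key : Real.exp a * (∑ j ∈ Finset.univ.erase y, Real.exp (z j))
      = Real.exp (2 * a) * ((∑ j ∈ Finset.univ.erase y, Real.exp (z j)) / (∑ j, Real.exp (z j)))
        * (Real.exp (-a) * ∑ j, Real.exp (z j)) := by
    have h1 : Real.exp (2 * a) * Real.exp (-a) = Real.exp a := by
      rw [← Real.exp_add]; ring_nf
    have h2 : (∑ j ∈ Finset.univ.erase y, Real.exp (z j)) / (∑ j, Real.exp (z j))
        * (∑ j, Real.exp (z j)) = ∑ j ∈ Finset.univ.erase y, Real.exp (z j) :=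
      div_mul_cancel₀ _ hD.ne'
    calc Real.exp a * (∑ j ∈ Finset.univ.erase y, Real.exp (z j))
        = Real.exp (2 * a) * Real.exp (-a)
          * ((∑ j ∈ Finset.univ.erase y, Real.exp (z j)) / (∑ j, Real.exp (z j))
            * (∑ j, Real.exp (z j))) := by rw [h1, h2]
      _ = Real.exp (2 * a) * ((∑ j ∈ Finset.univ.erase y, Real.exp (z j)) / (∑ j, Real.exp (z j)))
          * (Real.exp (-a) * ∑ j, Real.exp (z j)) := by ring
  calc ∑ j ∈ Finset.univ.erase y, Real.exp (z' j)
      ≤ Real.exp a * ∑ j ∈ Finset.univ.erase y, Real.exp (z j) := hN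
    _ = Real.exp (2 * a) * ((∑ j ∈ Finset.univ.erase y, Real.exp (z j)) / (∑ j, Real.exp (z j)))
        * (Real.exp (-a) * ∑ j, Real.exp (z j)) := key
    _ ≤ Real.exp (2 * a) * ((∑ j ∈ Finset.univ.erase y, Real.exp (z j)) / (∑ j, Real.exp (z j)))
        * (∑ j, Real.exp (z' j)) := by
        refine mul_le_mul_of_nonneg_left hDge ?_
        positivity

/-- stability of the proxy function,
`G(W') ≤ exp(2R ‖W' − W‖_max) · G(W)`. -/
theorem proxy_stability (n k d : ℕ) (hn : 1 ≤ n) (hk : 2 ≤ k) (hd : 1 ≤ d)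
    (x : Fin n → Fin d → ℝ) (y : Fin n → Fin k)
    (R : ℝ) (hR : 0 < R) (hx : ∀ i, norm1V (x i) ≤ R)
    (W W' : Fin k → Fin d → ℝ) :
    proxyG x y W' ≤ Real.exp (2 * R * ‖W' - W‖) * proxyG x y W := by
  set ε := ‖W' - W‖ with hε
  have hεnn : 0 ≤ ε := norm_nonneg _
  have ha : 0 ≤ R * ε := mul_nonneg hR.le hεnn
  have hent : ∀ c j, |W' c j - W c j| ≤ ε := by
    intro c j
    have h1 : ‖(W' - W) c‖ ≤ ε := norm_le_pi_norm (W' - W) c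
    have h2 : ‖(W' - W) c j‖ ≤ ‖(W' - W) c‖ := norm_le_pi_norm ((W' - W) c) j
    simpa [Real.norm_eq_abs] using h2.trans h1
  have hlog : ∀ i c, |logits W' (x i) c - logits W (x i) c| ≤ R * ε := by
    intro i c
    have : logits W' (x i) c - logits W (x i) c = ∑ j, (W' c j - W c j) * x i j := by
      simp [logits, ← Finset.sum_sub_distrib, sub_mul]
    rw [this]
    calc |∑ j, (W' c j - W c j) * x i j| ≤ ∑ j, |(W' c j - W c j) * x i j| :=
          Finset.abs_sum_le_sum_abs _ _
      _ ≤ ∑ j, ε * |x i j| := by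
          refine Finset.sum_le_sum fun j _ => ?_
          rw [abs_mul]
          exact mul_le_mul_of_nonneg_right (hent c j) (abs_nonneg _)
      _ = ε * norm1V (x i) := by rw [norm1V, Finset.mul_sum]
      _ ≤ ε * R := mul_le_mul_of_nonneg_left (hx i) hεnn
      _ = R * ε := mul_comm _ _
  have hterm : ∀ i, 1 - softmax (logits W' (x i)) (y i)
      ≤ Real.exp (2 * R * ε) * (1 - softmax (logits W (x i)) (y i)) := by
    intro i
    have := one_sub_softmax_stab (logits W (x i)) (logits W' (x i)) (y i) (R * ε) ha
      (hlog i)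
    simpa [mul_assoc] using this
  have hninv : (0:ℝ) ≤ 1 / n := by positivity
  calc proxyG x y W' ≤ (1/n) * ∑ i, Real.exp (2 * R * ε) * (1 - softmax (logits W (x i)) (y i)) :=
        mul_le_mul_of_nonneg_left (Finset.sum_le_sum fun i _ => hterm i) hninv
    _ = Real.exp (2 * R * ε) * proxyG x y W := by
        rw [proxyG, ← Finset.mul_sum]; ring
end

section
/- Let c > 0 and a ∈ (0,1]. Define η : ℕ → ℝ by η_t = c·t^{−a} for t ≥ 1, and let η_0 be any real number with 0 ≤ η_0 ≤ c. Then for every β ∈ (0,1) and every c₁ > 0, there exist t₀ ∈ ℕ and c₂ > 0 such that for all t ≥ t₀: ∑_{s=0}^{t} β^s (exp(c₁ ∑_{τ=1}^{s} η_{t−τ}) − 1) ≤ c₂ · η_t. -/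
open Finset Filter

open Topology

lemma aux_sqrt_step (m : ℕ) (hm : 1 ≤ m) :
    (m : ℝ) ^ (-(1/2) : ℝ) ≤ 2 * (Real.sqrt m - Real.sqrt ((m : ℝ) - 1)) := by
  have hm1 : (1:ℝ) ≤ m := by exact_mod_cast hm
  set u := Real.sqrt m with hu
  set v := Real.sqrt ((m:ℝ) - 1) with hv
  have hu2 : u^2 = m := Real.sq_sqrt (by linarith)
  have hv2 : v^2 = (m:ℝ) - 1 := Real.sq_sqrt (by linarith)
  have hupos : 0 < u := Real.sqrt_pos.mpr (by linarith)
  have hvnn : 0 ≤ v := Real.sqrt_nonneg _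
  have hrw : (m:ℝ) ^ (-(1/2):ℝ) = u⁻¹ := by
    rw [Real.rpow_neg (by positivity), ← Real.sqrt_eq_rpow]
  rw [hrw, inv_eq_one_div, div_le_iff₀ hupos]
  nlinarith [sq_nonneg (u - v)]

lemma aux_sum_rpow (a : ℝ) (ha0 : 0 < a) (ha1 : a ≤ 1) (T : ℕ) :
    ∑ m ∈ Finset.Icc 1 T, (m:ℝ) ^ (-a) ≤ 2 * (T:ℝ) ^ (1 - a/2) := by
  rcases Nat.eq_zero_or_pos T with hT | hT
  · subst hT; simp [Real.zero_rpow (by nlinarith : (1:ℝ) - a/2 ≠ 0)]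
  have hterm : ∀ m ∈ Finset.Icc 1 T, (m:ℝ) ^ (-a) ≤
      2 * (T:ℝ) ^ ((1-a)/2) * (Real.sqrt m - Real.sqrt ((m:ℝ) - 1)) := by
    intro m hmm
    rw [Finset.mem_Icc] at hmm
    obtain ⟨hm1, hmT⟩ := hmm
    have hm1' : (1:ℝ) ≤ m := by exact_mod_cast hm1
    have h1 : (m:ℝ) ^ (-a) ≤ (m:ℝ) ^ (-(a/2)) :=
      Real.rpow_le_rpow_of_exponent_le hm1' (by linarith)
    have h2 : (m:ℝ) ^ (-(a/2)) = (m:ℝ) ^ (-(1/2):ℝ) * (m:ℝ) ^ ((1-a)/2) := by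
      rw [← Real.rpow_add (by linarith : (0:ℝ) < m)]; ring_nf
    have h3 : (m:ℝ) ^ ((1-a)/2) ≤ (T:ℝ) ^ ((1-a)/2) :=
      Real.rpow_le_rpow (by positivity) (by exact_mod_cast hmT) (by linarith)
    have h4 := aux_sqrt_step m hm1
    have h5 : 0 ≤ Real.sqrt m - Real.sqrt ((m:ℝ) - 1) := by
      have := Real.sqrt_le_sqrt (by linarith : (m:ℝ) - 1 ≤ m)
      linarith
    calc (m:ℝ) ^ (-a) ≤ (m:ℝ) ^ (-(1/2):ℝ) * (m:ℝ) ^ ((1-a)/2) := by rw [← h2]; exact h1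
      _ ≤ (2 * (Real.sqrt m - Real.sqrt ((m:ℝ) - 1))) * (T:ℝ) ^ ((1-a)/2) := by
          apply mul_le_mul h4 h3 (by positivity) (by linarith)
      _ = 2 * (T:ℝ) ^ ((1-a)/2) * (Real.sqrt m - Real.sqrt ((m:ℝ) - 1)) := by ring
  calc ∑ m ∈ Finset.Icc 1 T, (m:ℝ) ^ (-a)
      ≤ ∑ m ∈ Finset.Icc 1 T, 2 * (T:ℝ) ^ ((1-a)/2) * (Real.sqrt m - Real.sqrt ((m:ℝ) - 1)) :=
        Finset.sum_le_sum hterm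
    _ = 2 * (T:ℝ) ^ ((1-a)/2) * ∑ m ∈ Finset.Icc 1 T, (Real.sqrt m - Real.sqrt ((m:ℝ) - 1)) := by
        rw [Finset.mul_sum]
    _ = 2 * (T:ℝ) ^ ((1-a)/2) * Real.sqrt T := by
        congr 1
        have : ∀ m ∈ Finset.Icc 1 T, Real.sqrt m - Real.sqrt ((m:ℝ)-1)
            = (fun i : ℕ => Real.sqrt i) m - (fun i : ℕ => Real.sqrt i) (m-1) := by
          intro m hmm
          rw [Finset.mem_Icc] at hmm
          have : ((m - 1 : ℕ) : ℝ) = (m:ℝ) - 1 := by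
            have := hmm.1; push_cast [Nat.cast_sub this]; ring
          simp [this]
        rw [Finset.sum_congr rfl this]
        have hIcc : Finset.Icc 1 T = Finset.Ico 1 (T+1) := by
          rw [Finset.Ico_add_one_right_eq_Icc]
        rw [hIcc, Finset.sum_Ico_eq_sum_range]
        simp only [Nat.add_sub_cancel]
        have : ∀ i ∈ Finset.range T, (fun i : ℕ => Real.sqrt i) (1+i) - (fun i : ℕ => Real.sqrt i) (1+i-1)
            = (fun i : ℕ => Real.sqrt i) (i+1) - (fun i : ℕ => Real.sqrt i) i := by
          intro i _; simp [add_comm]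
        rw [Finset.sum_congr rfl this, Finset.sum_range_sub (fun i : ℕ => Real.sqrt i)]
        simp
    _ ≤ 2 * (T:ℝ) ^ (1 - a/2) := by
        have hT0 : (0:ℝ) < T := by exact_mod_cast hT
        rw [Real.sqrt_eq_rpow, mul_assoc, ← Real.rpow_add hT0]
        apply le_of_eq; ring_nf

lemma aux_phi_tendsto (β c c₁ a b : ℝ) (hβ0 : 0 < β) (hβ1 : β < 1) (hb : b < 1) (hb0 : 0 < b) :
    Tendsto (fun x : ℝ => Real.log (x+1) + x/2 * Real.log β + (c₁*c + 2*c₁*c * x^b)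
        + a * Real.log x - Real.log c) atTop atBot := by
  have hlogβ : Real.log β < 0 := Real.log_neg hβ0 hβ1
  have hA : Tendsto (fun x : ℝ => Real.log x / x) atTop (𝓝 0) :=
    Real.isLittleO_log_id_atTop.tendsto_div_nhds_zero
  have hB : Tendsto (fun x : ℝ => (x+1)/x) atTop (𝓝 1) := by
    have he : (fun x : ℝ => 1 + x⁻¹) =ᶠ[atTop] (fun x : ℝ => (x+1)/x) := by
      filter_upwards [eventually_gt_atTop (0:ℝ)] with x hx
      field_simp
    refine Tendsto.congr' he ?_
    simpa using (tendsto_const_nhds (x := (1:ℝ))).add tendsto_inv_atTop_zero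
  have h1 : Tendsto (fun x : ℝ => Real.log (x+1) / x) atTop (𝓝 0) := by
    have hcomp : Tendsto (fun x : ℝ => Real.log (x+1) / (x+1)) atTop (𝓝 0) :=
      hA.comp (tendsto_atTop_add_const_right atTop 1 tendsto_id)
    have := hcomp.mul hB
    rw [mul_one] at this
    refine Tendsto.congr' ?_ this
    filter_upwards [eventually_gt_atTop (0:ℝ)] with x hx
    field_simp
  have h2 : Tendsto (fun x : ℝ => 2*c₁*c * x^(b-1)) atTop (𝓝 0) := by
    have := (tendsto_rpow_neg_atTop (show (0:ℝ) < 1-b by linarith)).const_mul (2*c₁*c)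
    simpa [neg_sub] using this
  have h3 : Tendsto (fun x : ℝ => (c₁*c - Real.log c)/x) atTop (𝓝 0) :=
    tendsto_const_nhds.div_atTop tendsto_id
  have h4 : Tendsto (fun x : ℝ => a * (Real.log x / x)) atTop (𝓝 0) := by
    simpa using hA.const_mul a
  have hψ : Tendsto (fun x : ℝ => Real.log (x+1)/x + Real.log β/2 + (c₁*c - Real.log c)/x
      + 2*c₁*c * x^(b-1) + a * (Real.log x / x)) atTop (𝓝 (Real.log β / 2)) := by
    have := (((h1.add (tendsto_const_nhds (x := Real.log β / 2))).add h3).add h2).add h4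
    simpa using this
  have hmain : Tendsto (fun x : ℝ => x * (Real.log (x+1)/x + Real.log β/2
      + (c₁*c - Real.log c)/x + 2*c₁*c * x^(b-1) + a * (Real.log x / x))) atTop atBot :=
    Filter.Tendsto.atTop_mul_neg (by linarith) tendsto_id hψ
  refine Tendsto.congr' ?_ hmain
  filter_upwards [eventually_ge_atTop (1:ℝ)] with x hx
  have hx0 : (0:ℝ) < x := by linarith
  have hxb : x * x^(b-1) = x^b := by
    rw [← Real.rpow_one_add' (le_of_lt hx0) (show (1:ℝ)+(b-1) ≠ 0 by intro h; linarith)]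
    ring_nf
  field_simp
  ring_nf
  rw [← hxb]
  ring

lemma aux_exp_sub_one_le (x : ℝ) : Real.exp x - 1 ≤ x * Real.exp x := by
  have h := Real.add_one_le_exp (-x)
  have hp := Real.exp_pos x
  have h2 : Real.exp (-x) * Real.exp x = 1 := by rw [← Real.exp_add]; simp
  nlinarith



/-- the polynomially decaying step sizes `η_t = c t^{−a}` eventually
satisfy `∑_{s=0}^{t} β^s (exp(c₁ ∑_{τ=1}^{s} η_{t−τ}) − 1) ≤ c₂ η_t`. -/
theorem stepsize_condition_polynomial_decay (c : ℝ) (hc : 0 < c)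
    (a : ℝ) (ha0 : 0 < a) (ha1 : a ≤ 1)
    (η : ℕ → ℝ) (hη : ∀ t : ℕ, 1 ≤ t → η t = c * (t : ℝ) ^ (-a))
    (hη00 : 0 ≤ η 0) (hη0c : η 0 ≤ c)
    (β : ℝ) (hβ0 : 0 < β) (hβ1 : β < 1)
    (c₁ : ℝ) (hc₁ : 0 < c₁) :
    ∃ t₀ : ℕ, ∃ c₂ : ℝ, 0 < c₂ ∧ ∀ t : ℕ, t₀ ≤ t →
      ∑ s ∈ Finset.range (t + 1),
          β ^ s * (Real.exp (c₁ * ∑ τ ∈ Finset.Icc 1 s, η (t - τ)) - 1)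
        ≤ c₂ * η t := by
  have hlogβ : Real.log β < 0 := Real.log_neg hβ0 hβ1
  set L : ℝ := -Real.log β with hLdef
  have hL : 0 < L := by simp only [hLdef]; linarith
  set b : ℝ := 1 - a/2 with hbdef
  have hb1 : b < 1 := by simp only [hbdef]; linarith
  have hb0 : 0 < b := by simp only [hbdef]; linarith
  have h2a : (0:ℝ) < 2 ^ a := Real.rpow_pos_of_pos (by norm_num) a
  set D : ℝ := c₁ * 2 ^ a with hDdef
  have hD : 0 < D := mul_pos hc₁ h2a
  set q : ℝ := Real.exp (Real.log β / 2) with hqdef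
  have hq0 : 0 < q := Real.exp_pos _
  have hq1 : q < 1 := Real.exp_lt_one_iff.mpr (by linarith)
  have hK : HasSum (fun s : ℕ => (s:ℝ) * q ^ s) (q / (1-q)^2) :=
    hasSum_coe_mul_geometric_of_norm_lt_one
      (by rwa [Real.norm_eq_abs, abs_of_pos hq0])
  set K : ℝ := q / (1-q)^2 with hKdef
  have hKpos : 0 < K := by
    exact div_pos hq0 (pow_pos (by linarith) 2)
  -- nonnegativity of η
  have hηnn : ∀ m : ℕ, 0 ≤ η m := by
    intro m
    rcases Nat.eq_zero_or_pos m with h | h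
    · subst h; exact hη00
    · rw [hη m h]; positivity
  -- eventual fact 1 : η t small
  have hev1 : ∀ᶠ t : ℕ in atTop, η t ≤ L / (2 * D) := by
    have htend : Tendsto (fun t : ℕ => η t) atTop (𝓝 0) := by
      have h0 : Tendsto (fun t : ℕ => c * (t:ℝ) ^ (-a)) atTop (𝓝 0) := by
        have := ((tendsto_rpow_neg_atTop ha0).comp tendsto_natCast_atTop_atTop).const_mul c
        simpa using this
      refine Tendsto.congr' ?_ h0
      filter_upwards [eventually_ge_atTop 1] with t ht
      exact (hη t ht).symm
    exact htend.eventually_le_const (div_pos hL (by linarith))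
  -- eventual fact 2 : tail smallness
  have hev2 : ∀ᶠ t : ℕ in atTop,
      ((t:ℝ) + 1) * Real.exp ((t:ℝ)/2 * Real.log β + (c₁*c + 2*c₁*c * (t:ℝ)^b))
        ≤ c * (t:ℝ) ^ (-a) := by
    have hφ := aux_phi_tendsto β c c₁ a b hβ0 hβ1 hb1 hb0
    have hev := hφ.eventually (eventually_le_atBot (0:ℝ))
    have hevR := hev.and (eventually_ge_atTop (1:ℝ))
    have hevN := tendsto_natCast_atTop_atTop.eventually hevR
    filter_upwards [hevN] with t ⟨hφt, ht1⟩
    have ht0 : (0:ℝ) < t := by linarith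
    have hlhs : ((t:ℝ) + 1) * Real.exp ((t:ℝ)/2 * Real.log β + (c₁*c + 2*c₁*c * (t:ℝ)^b))
        = Real.exp (Real.log ((t:ℝ)+1) + ((t:ℝ)/2 * Real.log β + (c₁*c + 2*c₁*c * (t:ℝ)^b))) := by
      have h := Real.exp_add (Real.log ((t:ℝ)+1)) ((t:ℝ)/2 * Real.log β + (c₁*c + 2*c₁*c * (t:ℝ)^b))
      rw [Real.exp_log (show (0:ℝ) < (t:ℝ)+1 by linarith)] at h
      exact h.symm
    have hrhs : c * (t:ℝ) ^ (-a) = Real.exp (Real.log c + (-a) * Real.log t) := by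
      rw [Real.exp_add, Real.exp_log hc, Real.rpow_def_of_pos ht0]
      congr 2
      ring
    rw [hlhs, hrhs]
    apply Real.exp_le_exp.mpr
    linarith
  -- choose t₀
  obtain ⟨t₀, ht₀⟩ := eventually_atTop.mp ((hev1.and hev2).and (eventually_ge_atTop 2))
  refine ⟨t₀, D * K + 1, by positivity, ?_⟩
  intro t ht
  obtain ⟨⟨h1, h2⟩, h3⟩ := ht₀ t ht
  have ht1 : (1:ℕ) ≤ t := by omega
  have htR : (2:ℝ) ≤ t := by exact_mod_cast h3
  have ht0R : (0:ℝ) < t := by linarith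
  have hηt : η t = c * (t:ℝ) ^ (-a) := hη t ht1
  have hηtpos : 0 < η t := by rw [hηt]; positivity
  -- global bound on partial sums of η
  have hSle : ∀ s : ℕ, s ≤ t → (∑ τ ∈ Finset.Icc 1 s, η (t - τ)) ≤ c + 2*c*(t:ℝ)^b := by
    intro s hs
    have hinj : ∀ x ∈ Finset.Icc 1 s, ∀ y ∈ Finset.Icc 1 s, t - x = t - y → x = y := by
      intro x hx y hy hxy
      rw [Finset.mem_Icc] at hx hy
      omega
    have h1' : (∑ τ ∈ Finset.Icc 1 s, η (t - τ)) = ∑ m ∈ (Finset.Icc 1 s).image (t - ·), η m :=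
      (Finset.sum_image hinj).symm
    have hsub : (Finset.Icc 1 s).image (t - ·) ⊆ Finset.range t := by
      intro m hm
      rw [Finset.mem_image] at hm
      obtain ⟨τ, hτ, rfl⟩ := hm
      rw [Finset.mem_Icc] at hτ
      rw [Finset.mem_range]
      omega
    have h2' : (∑ m ∈ (Finset.Icc 1 s).image (t - ·), η m) ≤ ∑ m ∈ Finset.range t, η m :=
      Finset.sum_le_sum_of_subset_of_nonneg hsub (fun i _ _ => hηnn i)
    have hins : Finset.range t = insert 0 (Finset.Icc 1 (t-1)) := by
      ext m; simp only [Finset.mem_range, Finset.mem_insert, Finset.mem_Icc]; omega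
    have h4' : (∑ m ∈ Finset.range t, η m) = η 0 + ∑ m ∈ Finset.Icc 1 (t-1), η m := by
      rw [hins, Finset.sum_insert (by simp)]
    have h5' : (∑ m ∈ Finset.Icc 1 (t-1), η m) = c * ∑ m ∈ Finset.Icc 1 (t-1), (m:ℝ)^(-a) := by
      rw [Finset.mul_sum]
      apply Finset.sum_congr rfl
      intro m hm
      rw [Finset.mem_Icc] at hm
      exact hη m hm.1
    have h6' : (∑ m ∈ Finset.Icc 1 (t-1), (m:ℝ)^(-a)) ≤ 2 * ((t-1:ℕ):ℝ) ^ (1 - a/2) :=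
      aux_sum_rpow a ha0 ha1 (t-1)
    have h7' : ((t-1:ℕ):ℝ) ^ (1 - a/2) ≤ (t:ℝ) ^ b := by
      rw [hbdef]
      apply Real.rpow_le_rpow (by positivity) _ (by linarith)
      exact_mod_cast Nat.sub_le t 1
    calc (∑ τ ∈ Finset.Icc 1 s, η (t - τ)) ≤ ∑ m ∈ Finset.range t, η m := by rw [h1']; exact h2'
      _ = η 0 + ∑ m ∈ Finset.Icc 1 (t-1), η m := h4'
      _ ≤ c + c * (2 * (t:ℝ)^b) := by
          rw [h5']
          have : (∑ m ∈ Finset.Icc 1 (t-1), (m:ℝ)^(-a)) ≤ 2 * (t:ℝ)^b := by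
            calc (∑ m ∈ Finset.Icc 1 (t-1), (m:ℝ)^(-a)) ≤ 2 * ((t-1:ℕ):ℝ) ^ (1 - a/2) := h6'
              _ ≤ 2 * (t:ℝ)^b := by linarith
          have := mul_le_mul_of_nonneg_left this (le_of_lt hc)
          linarith
      _ = c + 2*c*(t:ℝ)^b := by ring
  -- nonnegativity of inner sums
  have hSnn : ∀ s : ℕ, 0 ≤ ∑ τ ∈ Finset.Icc 1 s, η (t - τ) :=
    fun s => Finset.sum_nonneg (fun τ _ => hηnn _)
  -- split the sum
  set m : ℕ := t / 2 with hmdef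
  have hsplit : ∑ s ∈ Finset.range (t + 1),
        β ^ s * (Real.exp (c₁ * ∑ τ ∈ Finset.Icc 1 s, η (t - τ)) - 1)
      = (∑ s ∈ Finset.range (m+1),
          β ^ s * (Real.exp (c₁ * ∑ τ ∈ Finset.Icc 1 s, η (t - τ)) - 1))
      + ∑ s ∈ Finset.Ico (m+1) (t+1),
          β ^ s * (Real.exp (c₁ * ∑ τ ∈ Finset.Icc 1 s, η (t - τ)) - 1) := by
    rw [Finset.range_eq_Ico, ← Finset.sum_Ico_consecutive _ (Nat.zero_le (m+1)) (by omega),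
      ← Finset.range_eq_Ico]
  rw [hsplit]
  -- front bound
  have hfront : (∑ s ∈ Finset.range (m+1),
      β ^ s * (Real.exp (c₁ * ∑ τ ∈ Finset.Icc 1 s, η (t - τ)) - 1)) ≤ D * K * η t := by
    have hterm : ∀ s ∈ Finset.range (m+1),
        β ^ s * (Real.exp (c₁ * ∑ τ ∈ Finset.Icc 1 s, η (t - τ)) - 1)
          ≤ D * η t * ((s:ℝ) * q ^ s) := by
      intro s hsr
      rw [Finset.mem_range] at hsr
      have hsm : s ≤ m := by omega
      -- inner sum bound for the front
      have hη2 : ∀ τ ∈ Finset.Icc 1 s, η (t - τ) ≤ 2 ^ a * η t := by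
        intro τ hτ
        rw [Finset.mem_Icc] at hτ
        have htτ1 : 1 ≤ t - τ := by omega
        have hcast : (t:ℝ)/2 ≤ ((t - τ:ℕ):ℝ) := by
          have hle : t - t/2 ≤ t - τ := by omega
          have c1 : ((t - t/2:ℕ):ℝ) ≤ ((t - τ:ℕ):ℝ) := by exact_mod_cast hle
          have c2 : ((t - t/2:ℕ):ℝ) = (t:ℝ) - ((t/2:ℕ):ℝ) := by
            have : t/2 ≤ t := by omega
            push_cast [Nat.cast_sub this]; ring
          have c3 : ((t/2:ℕ):ℝ) ≤ (t:ℝ)/2 := by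
            have := Nat.cast_div_le (α := ℝ) (m := t) (n := 2)
            simpa using this
          linarith
        have hbase : ((t - τ:ℕ):ℝ) ^ (-a) ≤ ((t:ℝ)/2) ^ (-a) :=
          Real.rpow_le_rpow_of_nonpos (by linarith) hcast (by linarith)
        have heq : ((t:ℝ)/2) ^ (-a) = 2 ^ a * (t:ℝ)^(-a) := by
          rw [Real.div_rpow (by positivity) (by norm_num),
            Real.rpow_neg (by norm_num : (0:ℝ) ≤ 2)]
          field_simp
        rw [hη (t - τ) htτ1, hηt]
        calc c * ((t - τ:ℕ):ℝ) ^ (-a) ≤ c * (((t:ℝ)/2) ^ (-a)) :=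
              mul_le_mul_of_nonneg_left hbase (le_of_lt hc)
          _ = 2 ^ a * (c * (t:ℝ)^(-a)) := by rw [heq]; ring
      have hS2 : (∑ τ ∈ Finset.Icc 1 s, η (t - τ)) ≤ (s:ℝ) * (2 ^ a * η t) := by
        have := Finset.sum_le_card_nsmul (Finset.Icc 1 s) (fun τ => η (t - τ)) (2 ^ a * η t) hη2
        rw [Nat.card_Icc] at this
        simpa [nsmul_eq_mul] using this
      set x : ℝ := c₁ * ∑ τ ∈ Finset.Icc 1 s, η (t - τ) with hxdef
      have hx0 : 0 ≤ x := mul_nonneg (le_of_lt hc₁) (hSnn s)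
      have hxle : x ≤ D * η t * s := by
        rw [hxdef, hDdef]
        calc c₁ * ∑ τ ∈ Finset.Icc 1 s, η (t - τ) ≤ c₁ * ((s:ℝ) * (2 ^ a * η t)) :=
              mul_le_mul_of_nonneg_left hS2 (le_of_lt hc₁)
          _ = c₁ * 2 ^ a * η t * s := by ring
      have hxle2 : x ≤ L/2 * s := by
        have hDη : D * η t ≤ L/2 := by
          have := mul_le_mul_of_nonneg_left h1 (le_of_lt hD)
          calc D * η t ≤ D * (L / (2*D)) := this
            _ = L/2 := by field_simp
        calc x ≤ D * η t * s := hxle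
          _ ≤ L/2 * s := mul_le_mul_of_nonneg_right hDη (by positivity)
      have hee : Real.exp x - 1 ≤ (D * η t * s) * Real.exp (L/2 * s) := by
        calc Real.exp x - 1 ≤ x * Real.exp x := aux_exp_sub_one_le x
          _ ≤ (D * η t * s) * Real.exp (L/2 * s) := by
            apply mul_le_mul hxle (Real.exp_le_exp.mpr hxle2) (le_of_lt (Real.exp_pos x))
            positivity
      have hqq : β ^ s * Real.exp (L/2 * s) = q ^ s := by
        have hβs : β ^ s = Real.exp ((s:ℝ) * Real.log β) := by
          rw [Real.exp_nat_mul, Real.exp_log hβ0]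
        rw [hβs, hqdef, ← Real.exp_nat_mul, ← Real.exp_add]
        congr 1
        rw [hLdef]
        ring
      calc β ^ s * (Real.exp x - 1) ≤ β ^ s * ((D * η t * s) * Real.exp (L/2 * s)) := by
            apply mul_le_mul_of_nonneg_left hee (by positivity)
        _ = (D * η t * s) * (β ^ s * Real.exp (L/2 * s)) := by ring
        _ = D * η t * ((s:ℝ) * q ^ s) := by rw [hqq]; ring
    calc (∑ s ∈ Finset.range (m+1),
        β ^ s * (Real.exp (c₁ * ∑ τ ∈ Finset.Icc 1 s, η (t - τ)) - 1))
        ≤ ∑ s ∈ Finset.range (m+1), D * η t * ((s:ℝ) * q ^ s) := Finset.sum_le_sum hterm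
      _ = D * η t * ∑ s ∈ Finset.range (m+1), (s:ℝ) * q ^ s := by rw [Finset.mul_sum]
      _ ≤ D * η t * K := by
          apply mul_le_mul_of_nonneg_left _ (by positivity)
          exact sum_le_hasSum _ (fun i _ => by positivity) hK
      _ = D * K * η t := by ring
  -- tail bound
  have htail : (∑ s ∈ Finset.Ico (m+1) (t+1),
      β ^ s * (Real.exp (c₁ * ∑ τ ∈ Finset.Icc 1 s, η (t - τ)) - 1)) ≤ η t := by
    set M : ℝ := Real.exp ((t:ℝ)/2 * Real.log β + (c₁*c + 2*c₁*c * (t:ℝ)^b)) with hMdef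
    have hterm : ∀ s ∈ Finset.Ico (m+1) (t+1),
        β ^ s * (Real.exp (c₁ * ∑ τ ∈ Finset.Icc 1 s, η (t - τ)) - 1) ≤ M := by
      intro s hsi
      rw [Finset.mem_Ico] at hsi
      have hst : s ≤ t := by omega
      have hsge : (t:ℝ)/2 ≤ (s:ℝ) := by
        have : t ≤ 2 * s := by omega
        have : (t:ℝ) ≤ 2 * s := by exact_mod_cast this
        linarith
      have hβs : β ^ s = Real.exp ((s:ℝ) * Real.log β) := by
        rw [Real.exp_nat_mul, Real.exp_log hβ0]
      have hβsle : β ^ s ≤ Real.exp ((t:ℝ)/2 * Real.log β) := by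
        rw [hβs]
        apply Real.exp_le_exp.mpr
        apply mul_le_mul_of_nonpos_right hsge (le_of_lt hlogβ)
      have hSbd : c₁ * (∑ τ ∈ Finset.Icc 1 s, η (t - τ)) ≤ c₁*c + 2*c₁*c * (t:ℝ)^b := by
        have := mul_le_mul_of_nonneg_left (hSle s hst) (le_of_lt hc₁)
        linarith [this]
      calc β ^ s * (Real.exp (c₁ * ∑ τ ∈ Finset.Icc 1 s, η (t - τ)) - 1)
          ≤ β ^ s * Real.exp (c₁ * ∑ τ ∈ Finset.Icc 1 s, η (t - τ)) := by
            apply mul_le_mul_of_nonneg_left _ (by positivity)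
            linarith [Real.exp_pos (c₁ * ∑ τ ∈ Finset.Icc 1 s, η (t - τ))]
        _ ≤ Real.exp ((t:ℝ)/2 * Real.log β) * Real.exp (c₁*c + 2*c₁*c * (t:ℝ)^b) := by
            apply mul_le_mul hβsle (Real.exp_le_exp.mpr hSbd) (le_of_lt (Real.exp_pos _))
              (le_of_lt (Real.exp_pos _))
        _ = M := by rw [hMdef, ← Real.exp_add]
    have hcard : ((Finset.Ico (m+1) (t+1)).card : ℝ) ≤ (t:ℝ) + 1 := by
      rw [Nat.card_Ico]
      have : t + 1 - (m+1) ≤ t + 1 := by omega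
      exact_mod_cast this
    have hMnn : 0 ≤ M := le_of_lt (Real.exp_pos _)
    calc (∑ s ∈ Finset.Ico (m+1) (t+1),
        β ^ s * (Real.exp (c₁ * ∑ τ ∈ Finset.Icc 1 s, η (t - τ)) - 1))
        ≤ ((Finset.Ico (m+1) (t+1)).card : ℝ) * M := by
          have := Finset.sum_le_card_nsmul (Finset.Ico (m+1) (t+1)) _ M hterm
          simpa [nsmul_eq_mul] using this
      _ ≤ ((t:ℝ) + 1) * M := mul_le_mul_of_nonneg_right hcard hMnn
      _ ≤ c * (t:ℝ) ^ (-a) := h2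
      _ = η t := hηt.symm
  have hexp : (D*K+1)*η t = D*K*η t + η t := by ring
  linarith [hfront, htail]
end
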